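/- Let C be a category and W a class of morphisms satisfying CF1, CF2, CF3. Define two spans (u : C → A, u' : C → A') and (v : D → A, v' : D → A') over a fixed pair of W-morphisms w : A → B, w' : A' → B (with w∘u = w'∘u' ∈ W and w∘v = w'∘v' ∈ W) to be related if there exist r : E → C and s : E → D with u∘r = v∘s, u'∘r = v'∘s, and w∘u∘r ∈ W. Then this relation is an equivalence relation on such spans. -/
import Mathlib


/-!
STATEMENT 1: For a category `C` and a class `W` satisfying CF1–CF3, the
relation on connecting spans between two fixed `W`-morphisms `w : A ⟶ B`,
`w' : A' ⟶ B` ("there is a common refinement on which the two spans agree,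
with composite in `W`") is an equivalence relation.
-/

open CategoryTheory

universe v u

variable {C : Type u} [Category.{v} C]

/-- The Gabriel–Zisman (right) calculus of fractions conditions CF1–CF3. -/
structure FractionsCalculus (W : MorphismProperty C) : Prop where
  isos : ∀ {X Y : C} (f : X ⟶ Y), IsIso f → W f
  comp : ∀ {X Y Z : C} (f : X ⟶ Y) (g : Y ⟶ Z), W f → W g → W (f ≫ g)
  ore : ∀ {X A B : C} (f : X ⟶ B) (w : A ⟶ B), W w →
    ∃ (D : C) (fbar : D ⟶ A) (wbar : D ⟶ X), W wbar ∧ fbar ≫ w = wbar ≫ f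
  cancel : ∀ {A B X : C} (f g : A ⟶ B) (w : B ⟶ X), W w → f ≫ w = g ≫ w →
    ∃ (Y : C) (wt : Y ⟶ A), W wt ∧ wt ≫ f = wt ≫ g

/-- A connecting span between `w : A ⟶ B` and `w' : A' ⟶ B`: a span
`(u : C₀ ⟶ A, u' : C₀ ⟶ A')` with `u ≫ w = u' ≫ w'` and this common
composite in `W`. -/
structure ConnSpan (W : MorphismProperty C) {A A' B : C} (w : A ⟶ B) (w' : A' ⟶ B) where
  top : C
  u : top ⟶ A
  u' : top ⟶ A'
  comm : u ≫ w = u' ≫ w'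
  mem : W (u ≫ w)

/-- Two connecting spans are related when there are arrows `r`, `s` to their
vertices making everything commute, with `r ≫ u ≫ w ∈ W`. -/
def SpanEquiv (W : MorphismProperty C) {A A' B : C} (w : A ⟶ B) (w' : A' ⟶ B)
    (S T : ConnSpan W w w') : Prop :=
  ∃ (E : C) (r : E ⟶ S.top) (s : E ⟶ T.top),
    r ≫ S.u = s ≫ T.u ∧ r ≫ S.u' = s ≫ T.u' ∧ W (r ≫ S.u ≫ w)

theorem statement1 (W : MorphismProperty C) (hW : FractionsCalculus W)
    {A A' B : C} (w : A ⟶ B) (w' : A' ⟶ B) (hw : W w) (hw' : W w') :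
    Equivalence (SpanEquiv W w w') := by
  constructor
  · intro S
    exact ⟨S.top, 𝟙 _, 𝟙 _, rfl, rfl, by simpa using S.mem⟩
  · rintro S T ⟨E, r, s, h1, h2, h3⟩
    refine ⟨E, s, r, h1.symm, h2.symm, ?_⟩
    rw [← Category.assoc, ← h1, Category.assoc]; exact h3
  · rintro S T U ⟨E, r, s, h1, h2, h3⟩ ⟨E', r', s', h1', h2', h3'⟩
    -- h3 : W (r ≫ S.u ≫ w), and r≫S.u = s≫T.u so W (s ≫ T.u ≫ w)
    have h3T : W (s ≫ T.u ≫ w) := by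
      rw [← Category.assoc, ← h1, Category.assoc]; exact h3
    have h3T' : W (r' ≫ T.u ≫ w) := h3'
    obtain ⟨D, p, q, hq, hpq⟩ := hW.ore (r' ≫ T.u ≫ w) (s ≫ T.u ≫ w) h3T
    -- hpq : p ≫ (s ≫ T.u ≫ w) = q ≫ (r' ≫ T.u ≫ w)
    have heq : ((p ≫ s) ≫ T.u) ≫ w = ((q ≫ r') ≫ T.u) ≫ w := by
      simpa [Category.assoc] using hpq
    obtain ⟨Y, wt, hwt, hc⟩ := hW.cancel _ _ w hw heq
    have heq' : ((wt ≫ p ≫ s) ≫ T.u') ≫ w' = ((wt ≫ q ≫ r') ≫ T.u') ≫ w' := by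
      have := congrArg (fun f => wt ≫ f)
        (show (p ≫ s) ≫ T.u ≫ w = (q ≫ r') ≫ T.u ≫ w by
          simpa [Category.assoc] using hpq)
      simp only [Category.assoc, ← T.comm]
      simpa [Category.assoc] using this
    obtain ⟨Y2, wt2, hwt2, hc2⟩ := hW.cancel _ _ w' hw' heq'
    refine ⟨Y2, (wt2 ≫ wt ≫ p) ≫ r, (wt2 ≫ wt ≫ q) ≫ s', ?_, ?_, ?_⟩
    · have hc' : wt2 ≫ (wt ≫ (p ≫ s) ≫ T.u) = wt2 ≫ (wt ≫ (q ≫ r') ≫ T.u) := by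
        rw [hc]
      calc ((wt2 ≫ wt ≫ p) ≫ r) ≫ S.u = wt2 ≫ wt ≫ p ≫ (r ≫ S.u) := by
            simp [Category.assoc]
        _ = wt2 ≫ wt ≫ p ≫ (s ≫ T.u) := by rw [h1]
        _ = wt2 ≫ wt ≫ q ≫ (r' ≫ T.u) := by
            simpa [Category.assoc] using hc'
        _ = wt2 ≫ wt ≫ q ≫ (s' ≫ U.u) := by rw [h1']
        _ = ((wt2 ≫ wt ≫ q) ≫ s') ≫ U.u := by simp [Category.assoc]
    · calc ((wt2 ≫ wt ≫ p) ≫ r) ≫ S.u' = wt2 ≫ wt ≫ p ≫ (r ≫ S.u') := by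
            simp [Category.assoc]
        _ = wt2 ≫ wt ≫ p ≫ (s ≫ T.u') := by rw [h2]
        _ = wt2 ≫ wt ≫ q ≫ (r' ≫ T.u') := by
            simpa [Category.assoc] using hc2
        _ = wt2 ≫ wt ≫ q ≫ (s' ≫ U.u') := by rw [h2']
        _ = ((wt2 ≫ wt ≫ q) ≫ s') ≫ U.u' := by simp [Category.assoc]
    · have : ((wt2 ≫ wt ≫ p) ≫ r) ≫ S.u ≫ w
          = wt2 ≫ (wt ≫ (q ≫ (r' ≫ T.u ≫ w))) := by
        have hc' : wt2 ≫ (wt ≫ (p ≫ s) ≫ T.u) = wt2 ≫ (wt ≫ (q ≫ r') ≫ T.u) := by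
          rw [hc]
        calc ((wt2 ≫ wt ≫ p) ≫ r) ≫ S.u ≫ w
            = (wt2 ≫ wt ≫ p ≫ (r ≫ S.u)) ≫ w := by simp [Category.assoc]
          _ = (wt2 ≫ wt ≫ p ≫ (s ≫ T.u)) ≫ w := by rw [h1]
          _ = (wt2 ≫ wt ≫ q ≫ (r' ≫ T.u)) ≫ w := by
              congr 1; simpa [Category.assoc] using hc'
          _ = wt2 ≫ (wt ≫ (q ≫ (r' ≫ T.u ≫ w))) := by simp [Category.assoc]
      rw [this]
      exact hW.comp _ _ hwt2 (hW.comp _ _ hwt (hW.comp _ _ hq h3T'))
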